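/- Every binary orchard phylogenetic network is tree-based. -/
import Mathlib


/-- A (directed) phylogenetic-network-like graph on a finite set of
natural-number labelled vertices. -/
structure PNet where
  verts : Finset ℕ
  adj : ℕ → ℕ → Prop
  adjDec : DecidableRel adj
  adj_mem : ∀ u v, adj u v → u ∈ verts ∧ v ∈ verts

attribute [instance] PNet.adjDec

namespace PNet

/-- In-degree of a vertex. -/
def indeg (N : PNet) (v : ℕ) : ℕ := (N.verts.filter fun u => N.adj u v).card

/-- Out-degree of a vertex. -/
def outdeg (N : PNet) (v : ℕ) : ℕ := (N.verts.filter fun w => N.adj v w).card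

/-- A leaf is a vertex of out-degree 0. -/
def IsLeaf (N : PNet) (v : ℕ) : Prop := v ∈ N.verts ∧ N.outdeg v = 0

/-- A reticulation node is a vertex of in-degree 2. -/
def IsRetic (N : PNet) (v : ℕ) : Prop := v ∈ N.verts ∧ N.indeg v = 2

/-- A root is a vertex of in-degree 0. -/
def IsRoot (N : PNet) (v : ℕ) : Prop := v ∈ N.verts ∧ N.indeg v = 0

/-- The digraph is acyclic. -/
def Acyclic (N : PNet) : Prop := ∀ v, ¬ Relation.TransGen N.adj v v

/-- A binary (rooted) phylogenetic network: acyclic, a root of in-degree 0 and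
out-degree 2 from which all vertices are reachable, and every other vertex is a
tree node (in 1, out 2), a reticulation node (in 2, out 1) or a leaf (in 1, out 0). -/
def IsBinary (N : PNet) : Prop :=
  N.Acyclic ∧ ∃ ρ, N.IsRoot ρ ∧ N.outdeg ρ = 2 ∧
    (∀ v ∈ N.verts, Relation.ReflTransGen N.adj ρ v) ∧
    (∀ v ∈ N.verts, v ≠ ρ →
      (N.indeg v = 1 ∧ N.outdeg v = 2) ∨ (N.indeg v = 2 ∧ N.outdeg v = 1) ∨
      (N.indeg v = 1 ∧ N.outdeg v = 0))

/-- Tree-child: every internal node has a child that is not a reticulation. -/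
def TreeChild (N : PNet) : Prop :=
  ∀ v ∈ N.verts, N.outdeg v ≠ 0 → ∃ c, N.adj v c ∧ N.indeg c ≠ 2

/-- Stack-free: no edge joins two reticulation nodes. -/
def StackFree (N : PNet) : Prop :=
  ∀ u v, N.adj u v → ¬ (N.indeg u = 2 ∧ N.indeg v = 2)

end PNet

namespace PNet

/-- Cherry reduction: for a cherry `(x,y)` (two leaves with common parent `p`),
delete `y` and suppress the resulting degree-two node `p` (when `p` is not the
root). -/
def CherryPick (N N' : PNet) : Prop :=
  ∃ x y p, x ≠ y ∧ N.IsLeaf x ∧ N.IsLeaf y ∧ N.adj p x ∧ N.adj p y ∧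
    ((N.indeg p = 0 ∧ N'.verts = N.verts \ {y} ∧
        ∀ u v, N'.adj u v ↔ (N.adj u v ∧ v ≠ y)) ∨
     (∃ q, N.adj q p ∧ N'.verts = N.verts \ {y, p} ∧
        ∀ u v, N'.adj u v ↔
          ((N.adj u v ∧ u ≠ p ∧ v ≠ p ∧ v ≠ y) ∨ (u = q ∧ v = x))))

/-- Reticulated cherry reduction: leaves `x` and `y`, the parent `w` of `x` is
a reticulation, and a tree node `p` is a common parent of `y` and `w`.  Delete
the hybrid edge `(p,w)` and suppress the resulting degree-two nodes. -/
def RetCherryPick (N N' : PNet) : Prop :=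
  ∃ x y w p, x ≠ y ∧ N.IsLeaf x ∧ N.IsLeaf y ∧
    N.adj w x ∧ N.indeg w = 2 ∧ N.adj p w ∧ N.adj p y ∧ N.indeg p ≤ 1 ∧
    ∃ q', q' ≠ p ∧ N.adj q' w ∧
    ((N.indeg p = 0 ∧ N'.verts = N.verts \ {w} ∧
        ∀ u v, N'.adj u v ↔
          ((N.adj u v ∧ u ≠ w ∧ v ≠ w) ∨ (u = q' ∧ v = x))) ∨
     (∃ q, N.adj q p ∧ N'.verts = N.verts \ {w, p} ∧
        ∀ u v, N'.adj u v ↔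
          ((N.adj u v ∧ u ≠ w ∧ v ≠ w ∧ u ≠ p ∧ v ≠ p) ∨
            (u = q' ∧ v = x) ∨ (u = q ∧ v = y))))

/-- One cherry or reticulated-cherry reduction step. -/
def Reduce (N N' : PNet) : Prop := N.CherryPick N' ∨ N.RetCherryPick N'

/-- The trivial network: a root with a single leaf child. -/
def IsTrivialNet (T : PNet) : Prop :=
  ∃ r l, r ≠ l ∧ T.verts = {r, l} ∧ ∀ u v, (T.adj u v ↔ (u = r ∧ v = l))

/-- Orchard: reducible to the trivial network by cherry and
reticulated-cherry reductions. -/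
def Orchard (N : PNet) : Prop :=
  ∃ T, IsTrivialNet T ∧ Relation.ReflTransGen Reduce N T

end PNet

namespace PNet

/-- Tree-based: `N` has a rooted spanning tree (a subgraph in which every
non-root vertex has a unique parent) all of whose leaves are leaves of `N`. -/
def TreeBased (N : PNet) : Prop :=
  ∃ S : ℕ → ℕ → Prop,
    (∀ u v, S u v → N.adj u v) ∧
    (∀ v ∈ N.verts, 0 < N.indeg v → ∃! u, S u v) ∧
    (∀ v ∈ N.verts, N.indeg v = 0 → ∀ u, ¬ S u v) ∧
    (∀ v ∈ N.verts, (∀ w, ¬ S v w) → N.outdeg v = 0)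

end PNet

namespace PNet
variable {N : PNet} {u u' v v' x y z : ℕ}

lemma indeg_pos_of_adj (h : N.adj u v) : 0 < N.indeg v := by
  have hm := N.adj_mem u v h
  exact Finset.card_pos.2 ⟨u, Finset.mem_filter.2 ⟨hm.1, h⟩⟩

lemma outdeg_pos_of_adj (h : N.adj u v) : 0 < N.outdeg u := by
  have hm := N.adj_mem u v h
  exact Finset.card_pos.2 ⟨v, Finset.mem_filter.2 ⟨hm.2, h⟩⟩

lemma not_adj_of_outdeg_zero (h : N.outdeg u = 0) : ¬ N.adj u v :=
  fun ha => by simpa [h] using outdeg_pos_of_adj ha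

lemma not_adj_of_indeg_zero (h : N.indeg v = 0) : ¬ N.adj u v :=
  fun ha => by simpa [h] using indeg_pos_of_adj ha

lemma parent_unique (h : N.indeg v ≤ 1) (h1 : N.adj u v) (h2 : N.adj u' v) : u = u' := by
  by_contra hne
  have hsub : ({u, u'} : Finset ℕ) ⊆ N.verts.filter fun a => N.adj a v := by
    intro a ha
    rcases Finset.mem_insert.1 ha with rfl | ha
    · exact Finset.mem_filter.2 ⟨(N.adj_mem _ _ h1).1, h1⟩
    · rcases Finset.mem_singleton.1 ha with rfl
      exact Finset.mem_filter.2 ⟨(N.adj_mem _ _ h2).1, h2⟩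
  have := Finset.card_le_card hsub
  rw [Finset.card_pair hne] at this
  exact absurd (le_trans this h) (by omega)

lemma child_unique (h : N.outdeg u ≤ 1) (h1 : N.adj u v) (h2 : N.adj u v') : v = v' := by
  by_contra hne
  have hsub : ({v, v'} : Finset ℕ) ⊆ N.verts.filter fun a => N.adj u a := by
    intro a ha
    rcases Finset.mem_insert.1 ha with rfl | ha
    · exact Finset.mem_filter.2 ⟨(N.adj_mem _ _ h1).2, h1⟩
    · rcases Finset.mem_singleton.1 ha with rfl
      exact Finset.mem_filter.2 ⟨(N.adj_mem _ _ h2).2, h2⟩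
  have := Finset.card_le_card hsub
  rw [Finset.card_pair hne] at this
  exact absurd (le_trans this h) (by omega)

lemma child_mem_pair (h : N.outdeg u ≤ 2) (hx : N.adj u x) (hy : N.adj u y)
    (hxy : x ≠ y) (hz : N.adj u z) : z = x ∨ z = y := by
  by_contra hne
  push_neg at hne
  have hsub : ({z, x, y} : Finset ℕ) ⊆ N.verts.filter fun a => N.adj u a := by
    intro a ha
    simp only [Finset.mem_insert, Finset.mem_singleton] at ha
    rcases ha with rfl | rfl | rfl
    · exact Finset.mem_filter.2 ⟨(N.adj_mem _ _ hz).2, hz⟩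
    · exact Finset.mem_filter.2 ⟨(N.adj_mem _ _ hx).2, hx⟩
    · exact Finset.mem_filter.2 ⟨(N.adj_mem _ _ hy).2, hy⟩
  have hc := Finset.card_le_card hsub
  have h3 : ({z, x, y} : Finset ℕ).card = 3 := by
    rw [Finset.card_insert_of_notMem (by simp [hne.1, hne.2]), Finset.card_pair hxy]
  exact absurd (le_trans (h3 ▸ hc) h) (by omega)


lemma parent_mem_pair (h : N.indeg v ≤ 2) (hx : N.adj x v) (hy : N.adj y v)
    (hxy : x ≠ y) (hz : N.adj z v) : z = x ∨ z = y := by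
  by_contra hne
  push_neg at hne
  have hsub : ({z, x, y} : Finset ℕ) ⊆ N.verts.filter fun a => N.adj a v := by
    intro a ha
    simp only [Finset.mem_insert, Finset.mem_singleton] at ha
    rcases ha with rfl | rfl | rfl
    · exact Finset.mem_filter.2 ⟨(N.adj_mem _ _ hz).1, hz⟩
    · exact Finset.mem_filter.2 ⟨(N.adj_mem _ _ hx).1, hx⟩
    · exact Finset.mem_filter.2 ⟨(N.adj_mem _ _ hy).1, hy⟩
  have hc := Finset.card_le_card hsub
  have h3 : ({z, x, y} : Finset ℕ).card = 3 := by
    rw [Finset.card_insert_of_notMem (by simp [hne.1, hne.2]), Finset.card_pair hxy]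
  exact absurd (le_trans (h3 ▸ hc) h) (by omega)

lemma not_self_adj (hac : N.Acyclic) : ¬ N.adj v v :=
  fun h => hac v (Relation.TransGen.single h)

lemma not_adj_adj (hac : N.Acyclic) (h1 : N.adj u v) (h2 : N.adj v u) : False :=
  hac u (Relation.TransGen.head h1 (Relation.TransGen.single h2))

/-- Adding edges whose targets have no outgoing edges preserves acyclicity. -/
lemma acyclic_lift {adj adj' : ℕ → ℕ → Prop} (hac : ∀ v, ¬ Relation.TransGen adj v v)
    (x1 x2 : ℕ) (h : ∀ u v, adj' u v → adj u v ∨ v = x1 ∨ v = x2)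
    (h1 : ∀ v, ¬ adj' x1 v) (h2 : ∀ v, ¬ adj' x2 v) :
    ∀ v, ¬ Relation.TransGen adj' v v := by
  have key : ∀ a b, Relation.TransGen adj' a b →
      Relation.TransGen adj a b ∨ b = x1 ∨ b = x2 := by
    intro a b hab
    induction hab with
    | single hd =>
      rcases h _ _ hd with hd' | hd' | hd'
      · exact Or.inl (Relation.TransGen.single hd')
      · exact Or.inr (Or.inl hd')
      · exact Or.inr (Or.inr hd')
    | tail hac' hd ih =>
      rcases ih with ih | rfl | rfl
      · rcases h _ _ hd with hd' | hd' | hd'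
        · exact Or.inl (Relation.TransGen.tail ih hd')
        · exact Or.inr (Or.inl hd')
        · exact Or.inr (Or.inr hd')
      · exact absurd hd (h1 _)
      · exact absurd hd (h2 _)
  intro v hv
  rcases key v v hv with h' | rfl | rfl
  · exact hac v h'
  · rcases Relation.TransGen.head'_iff.1 hv with ⟨c, hd, _⟩
    exact h1 _ hd
  · rcases Relation.TransGen.head'_iff.1 hv with ⟨c, hd, _⟩
    exact h2 _ hd

end PNet
namespace PNet

lemma isTrivial_treeBased {T : PNet} (h : T.IsTrivialNet) : T.TreeBased := by
  obtain ⟨r, l, hrl, hverts, hadj⟩ := h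
  refine ⟨T.adj, fun u v hv => hv, ?_, ?_, ?_⟩
  · intro v hv hpos
    obtain ⟨u, hu⟩ := Finset.card_pos.1 hpos
    obtain ⟨hu1, hu2⟩ := Finset.mem_filter.1 hu
    obtain ⟨he1, he2⟩ := (hadj _ _).1 hu2
    subst he1; subst he2
    exact ⟨u, hu2, fun u' hu' => ((hadj _ _).1 hu').1⟩
  · intro v hv h0 u hu
    exact absurd (indeg_pos_of_adj hu) (by omega)
  · intro v hv hnc
    rcases Finset.mem_insert.1 (hverts ▸ hv) with rfl | hv'
    · exact absurd ((hadj v l).2 ⟨rfl, rfl⟩) (hnc l)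
    · rcases Finset.mem_singleton.1 hv' with rfl
      unfold outdeg
      rw [Finset.card_eq_zero, Finset.filter_eq_empty_iff]
      intro w hw hvw
      exact hrl (((hadj _ _).1 hvw).1.symm)

end PNet
namespace PNet

lemma cherry_lift {N N' : PNet} (hbin : N.IsBinary) (h : N.CherryPick N') :
    N.TreeBased ∨ (N'.IsBinary ∧ (N'.TreeBased → N.TreeBased)) := by
  obtain ⟨hac, ρ, ⟨hρv, hρ0⟩, hρ2, hreach, hclass⟩ := hbin
  obtain ⟨x, y, p, hxy, ⟨hxv, hx0⟩, ⟨hyv, hy0⟩, hpx, hpy, hcase⟩ := h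
  have hpv : p ∈ N.verts := (N.adj_mem p x hpx).1
  have hpx' : p ≠ x := fun he => not_self_adj hac (he ▸ hpx)
  have hpy' : p ≠ y := fun he => not_self_adj hac (he ▸ hpy)
  have hxρ : x ≠ ρ := fun he => by rw [he, hρ2] at hx0; omega
  have hyρ : y ≠ ρ := fun he => by rw [he, hρ2] at hy0; omega
  have hx1 : N.indeg x = 1 := by
    rcases hclass x hxv hxρ with ⟨_, h2⟩ | ⟨_, h2⟩ | ⟨h1, _⟩ <;> omega
  have hy1 : N.indeg y = 1 := by
    rcases hclass y hyv hyρ with ⟨_, h2⟩ | ⟨_, h2⟩ | ⟨h1, _⟩ <;> omega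
  have hxpar : ∀ u, N.adj u x → u = p := fun u hu => parent_unique (by omega) hu hpx
  have hypar : ∀ u, N.adj u y → u = p := fun u hu => parent_unique (by omega) hu hpy
  rcases hcase with ⟨hp0, hverts', hadj'⟩ | ⟨q, hqp, hverts', hadj'⟩
  · -- p is the root: N is itself essentially trivial; construct S directly.
    left
    have hpρ : p = ρ := by
      by_contra hne
      rcases hclass p hpv hne with ⟨h1, _⟩ | ⟨h1, _⟩ | ⟨h1, _⟩ <;> omega
    have hout2 : N.outdeg p ≤ 2 := by rw [hpρ, hρ2]
    have hpchild : ∀ z, N.adj p z → z = x ∨ z = y :=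
      fun z hz => child_mem_pair hout2 hpx hpy hxy hz
    have hsmall : ∀ v, Relation.ReflTransGen N.adj ρ v → v = p ∨ v = x ∨ v = y := by
      intro v hv
      induction hv with
      | refl => exact Or.inl hpρ.symm
      | tail hst hd ih =>
        rcases ih with rfl | rfl | rfl
        · exact Or.inr (hpchild _ hd)
        · exact absurd hd (not_adj_of_outdeg_zero hx0)
        · exact absurd hd (not_adj_of_outdeg_zero hy0)
    refine ⟨N.adj, fun u v hv => hv, ?_, ?_, ?_⟩
    · intro v hv hpos
      rcases hsmall v (hreach v hv) with rfl | rfl | rfl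
      · rw [hp0] at hpos; omega
      · exact ⟨p, hpx, fun u hu => hxpar u hu⟩
      · exact ⟨p, hpy, fun u hu => hypar u hu⟩
    · intro v hv h0 u hu
      exact absurd (indeg_pos_of_adj hu) (by omega)
    · intro v hv hnc
      rcases hsmall v (hreach v hv) with rfl | rfl | rfl
      · exact absurd hpx (hnc x)
      · exact hx0
      · exact hy0
  · -- non-root case
    right
    have hqv : q ∈ N.verts := (N.adj_mem q p hqp).1
    have hqp' : q ≠ p := fun he => not_self_adj hac (he ▸ hqp)
    have hqx : q ≠ x := fun he => not_adj_of_outdeg_zero hx0 (he ▸ hqp)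
    have hqy : q ≠ y := fun he => not_adj_of_outdeg_zero hy0 (he ▸ hqp)
    have hpρ : p ≠ ρ := fun he => by
      have := indeg_pos_of_adj hqp; rw [he, hρ0] at this; omega
    have hp1 : N.indeg p = 1 ∧ N.outdeg p = 2 := by
      rcases hclass p hpv hpρ with h' | ⟨h1, h2⟩ | ⟨h1, h2⟩
      · exact h'
      · exact absurd (child_unique (by omega) hpx hpy) hxy
      · exact absurd hpx (not_adj_of_outdeg_zero h2)
    have hppar : ∀ u, N.adj u p → u = q := fun u hu => parent_unique (by omega) hu hqp
    have hpchild : ∀ z, N.adj p z → z = x ∨ z = y :=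
      fun z hz => child_mem_pair (by omega) hpx hpy hxy hz
    have hmem' : ∀ v, v ∈ N'.verts ↔ v ∈ N.verts ∧ v ≠ y ∧ v ≠ p := by
      intro v
      simp only [hverts', Finset.mem_sdiff, Finset.mem_insert, Finset.mem_singleton]
      tauto
    have hxv' : x ∈ N'.verts := (hmem' x).2 ⟨hxv, hxy, fun he => hpx' he.symm⟩
    have hqv' : q ∈ N'.verts := (hmem' q).2 ⟨hqv, hqy, hqp'⟩
    have hρv' : ρ ∈ N'.verts := (hmem' ρ).2 ⟨hρv, fun he => hyρ he.symm, fun he => hpρ he.symm⟩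
    -- no N-edge goes out of y, out of x, into anything from p except x,y, etc.
    -- degree preservation
    have hind : ∀ v ∈ N'.verts, N'.indeg v = N.indeg v := by
      intro v hv
      obtain ⟨hv0, hvy, hvp⟩ := (hmem' v).1 hv
      by_cases hvx : v = x
      · have hfil : N'.verts.filter (fun a => N'.adj a x) = {q} := by
          ext a
          simp only [Finset.mem_filter, Finset.mem_singleton]
          constructor
          · rintro ⟨ha, hadj⟩
            rcases (hadj' a x).1 hadj with ⟨h1, h2, -⟩ | ⟨rfl, -⟩
            · exact absurd (hxpar a h1) h2
            · rfl
          · intro ha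
            exact ⟨ha ▸ hqv', (hadj' a x).2 (Or.inr ⟨ha, rfl⟩)⟩
        unfold indeg
        rw [hvx, hfil, Finset.card_singleton]
        exact hx1.symm
      · have : N'.verts.filter (fun a => N'.adj a v) = N.verts.filter (fun a => N.adj a v) := by
          ext a
          simp only [Finset.mem_filter, hmem']
          constructor
          · rintro ⟨⟨ha, -, -⟩, hadj⟩
            rcases (hadj' a v).1 hadj with ⟨h1, -⟩ | ⟨-, rfl⟩
            · exact ⟨ha, h1⟩
            · exact absurd rfl hvx
          · rintro ⟨ha, hadj⟩
            have hay : a ≠ y := fun he => not_adj_of_outdeg_zero hy0 (he ▸ hadj)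
            have hap : a ≠ p := by
              rintro rfl
              rcases hpchild v hadj with rfl | rfl
              · exact hvx rfl
              · exact hvy rfl
            exact ⟨⟨ha, hay, hap⟩, (hadj' a v).2 (Or.inl ⟨hadj, hap, hvp, hvy⟩)⟩
        unfold indeg
        rw [this]
    have houtd : ∀ v ∈ N'.verts, N'.outdeg v = N.outdeg v := by
      intro v hv
      obtain ⟨hv0, hvy, hvp⟩ := (hmem' v).1 hv
      by_cases hvq : v = q
      · have hset : N'.verts.filter (fun z => N'.adj q z)
            = insert x ((N.verts.filter (fun z => N.adj q z)).erase p) := by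
          ext z
          simp only [Finset.mem_filter, Finset.mem_insert, Finset.mem_erase, hmem']
          constructor
          · rintro ⟨⟨hz, hzy, hzp⟩, hadj⟩
            rcases (hadj' q z).1 hadj with ⟨h1, -⟩ | ⟨-, rfl⟩
            · exact Or.inr ⟨hzp, hz, h1⟩
            · exact Or.inl rfl
          · rintro (rfl | ⟨hzp, hz, hadj⟩)
            · exact ⟨⟨hxv, hxy, fun he => hpx' he.symm⟩, (hadj' q z).2 (Or.inr ⟨rfl, rfl⟩)⟩
            · have hzy : z ≠ y := fun he => (hqp' (hypar q (he ▸ hadj)))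
              exact ⟨⟨hz, hzy, hzp⟩, (hadj' q z).2 (Or.inl ⟨hadj, hqp', hzp, hzy⟩)⟩
        have hxne : x ∉ (N.verts.filter (fun z => N.adj q z)).erase p := by
          intro hx
          have hadj := (Finset.mem_filter.1 (Finset.mem_erase.1 hx).2).2
          exact hqp' (hxpar q hadj)
        have hpmem : p ∈ N.verts.filter (fun z => N.adj q z) := Finset.mem_filter.2 ⟨hpv, hqp⟩
        unfold outdeg
        rw [hvq, hset, Finset.card_insert_of_notMem hxne, Finset.card_erase_of_mem hpmem]
        have : 0 < (N.verts.filter (fun z => N.adj q z)).card := Finset.card_pos.2 ⟨p, hpmem⟩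
        omega
      · have : N'.verts.filter (fun z => N'.adj v z) = N.verts.filter (fun z => N.adj v z) := by
          ext z
          simp only [Finset.mem_filter, hmem']
          constructor
          · rintro ⟨⟨hz, -, -⟩, hadj⟩
            rcases (hadj' v z).1 hadj with ⟨h1, -⟩ | ⟨rfl, -⟩
            · exact ⟨hz, h1⟩
            · exact absurd rfl hvq
          · rintro ⟨hz, hadj⟩
            have hzp : z ≠ p := fun he => hvq (hppar v (he ▸ hadj))
            have hzy : z ≠ y := fun he => hvp (hypar v (he ▸ hadj))
            exact ⟨⟨hz, hzy, hzp⟩, (hadj' v z).2 (Or.inl ⟨hadj, hvp, hzp, hzy⟩)⟩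
        unfold outdeg
        rw [this]
    -- x has no outgoing edges in N'
    have hxout' : ∀ z, ¬ N'.adj x z := by
      intro z hz
      rcases (hadj' x z).1 hz with ⟨h1, -⟩ | ⟨rfl, -⟩
      · exact not_adj_of_outdeg_zero hx0 h1
      · exact hqx rfl
    constructor
    · -- N' is binary
      refine ⟨acyclic_lift hac x x ?_ hxout' hxout', ρ, ⟨hρv', ?_⟩, ?_, ?_, ?_⟩
      · intro u v hv
        rcases (hadj' u v).1 hv with ⟨h1, -⟩ | ⟨-, rfl⟩
        · exact Or.inl h1
        · exact Or.inr (Or.inl rfl)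
      · rw [hind ρ hρv', hρ0]
      · rw [houtd ρ hρv', hρ2]
      · -- reachability
        have claim : ∀ v, Relation.ReflTransGen N.adj ρ v →
            v ∈ N'.verts → v ≠ x → Relation.ReflTransGen N'.adj ρ v := by
          intro v hv
          induction hv with
          | refl => intro _ _; exact Relation.ReflTransGen.refl
          | tail hst hd ih =>
            rename_i c v'
            intro hv' hvx
            obtain ⟨hv0, hvy, hvp⟩ := (hmem' v').1 hv'
            have hcx : c ≠ x := fun he => not_adj_of_outdeg_zero hx0 (he ▸ hd)
            have hcy : c ≠ y := fun he => not_adj_of_outdeg_zero hy0 (he ▸ hd)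
            have hcp : c ≠ p := by
              rintro rfl
              rcases hpchild v' hd with rfl | rfl
              · exact hvx rfl
              · exact hvy rfl
            have hcv' : c ∈ N'.verts := (hmem' c).2 ⟨(N.adj_mem c v' hd).1, hcy, hcp⟩
            exact (ih hcv' hcx).tail ((hadj' c v').2 (Or.inl ⟨hd, hcp, hvp, hvy⟩))
        intro v hv
        by_cases hvx : v = x
        · subst hvx
          exact (claim q (hreach q hqv) hqv' hqx).tail ((hadj' q v).2 (Or.inr ⟨rfl, rfl⟩))
        · exact claim v (hreach v ((hmem' v).1 hv).1) hv hvx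
      · intro v hv hvρ
        rw [hind v hv, houtd v hv]
        exact hclass v ((hmem' v).1 hv).1 hvρ
    · -- lifting tree-basedness
      rintro ⟨S', hS1, hS2, hS3, hS4⟩
      refine ⟨fun u v => (S' u v ∧ v ≠ x) ∨ (u = p ∧ (v = x ∨ v = y)) ∨ (u = q ∧ v = p),
        ?_, ?_, ?_, ?_⟩
      · rintro u v (⟨hs, hvx⟩ | ⟨rfl, rfl | rfl⟩ | ⟨rfl, rfl⟩)
        · rcases (hadj' u v).1 (hS1 u v hs) with ⟨h1, -⟩ | ⟨-, rfl⟩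
          · exact h1
          · exact absurd rfl hvx
        · exact hpx
        · exact hpy
        · exact hqp
      · intro v hv hpos
        by_cases hvx : v = x
        · refine ⟨p, Or.inr (Or.inl ⟨rfl, Or.inl hvx⟩), ?_⟩
          rintro u (⟨-, hne⟩ | ⟨hup, -⟩ | ⟨-, hvp⟩)
          · exact absurd hvx hne
          · exact hup
          · exact absurd (hvx.symm.trans hvp) (Ne.symm hpx')
        · by_cases hvy : v = y
          · refine ⟨p, Or.inr (Or.inl ⟨rfl, Or.inr hvy⟩), ?_⟩
            rintro u (⟨hs, -⟩ | ⟨hup, -⟩ | ⟨-, hvp⟩)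
            · rcases (hadj' u v).1 (hS1 u v hs) with ⟨-, -, -, hne⟩ | ⟨-, he⟩
              · exact absurd hvy hne
              · exact absurd he hvx
            · exact hup
            · exact absurd (hvy.symm.trans hvp) (Ne.symm hpy')
          · by_cases hvp : v = p
            · refine ⟨q, Or.inr (Or.inr ⟨rfl, hvp⟩), ?_⟩
              rintro u (⟨hs, -⟩ | ⟨huq, he | he⟩ | ⟨huq, -⟩)
              · rcases (hadj' u v).1 (hS1 u v hs) with ⟨-, -, hne, -⟩ | ⟨-, he⟩
                · exact absurd hvp hne
                · exact absurd he hvx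
              · exact absurd (hvp.symm.trans he) hpx'
              · exact absurd (hvp.symm.trans he) hpy'
              · exact huq
            · have hv' : v ∈ N'.verts := (hmem' v).2 ⟨hv, hvy, hvp⟩
              obtain ⟨u0, hu0, huniq⟩ := hS2 v hv' (by rw [hind v hv']; exact hpos)
              refine ⟨u0, Or.inl ⟨hu0, hvx⟩, ?_⟩
              rintro u (⟨hs, -⟩ | ⟨-, he | he⟩ | ⟨-, he⟩)
              · exact huniq u hs
              · exact absurd he hvx
              · exact absurd he hvy
              · exact absurd he hvp
      · intro v hv h0 u hu
        have hvx : v ≠ x := fun he => by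
          rw [he] at h0; omega
        have hvy : v ≠ y := fun he => by
          have := indeg_pos_of_adj hpy; rw [← he] at this; omega
        have hvp : v ≠ p := fun he => by
          have := indeg_pos_of_adj hqp; rw [← he] at this; omega
        rcases hu with ⟨hs, -⟩ | ⟨-, he | he⟩ | ⟨-, he⟩
        · have hv' : v ∈ N'.verts := (hmem' v).2 ⟨hv, hvy, hvp⟩
          exact hS3 v hv' (by rw [hind v hv', h0]) u hs
        · exact absurd he hvx
        · exact absurd he hvy
        · exact absurd he hvp
      · intro v hv hnc
        by_cases hvp : v = p
        · exact absurd (Or.inr (Or.inl ⟨hvp, Or.inl rfl⟩)) (hnc x)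
        · by_cases hvq : v = q
          · exact absurd (Or.inr (Or.inr ⟨hvq, rfl⟩)) (hnc p)
          · by_cases hvx : v = x
            · rw [hvx]; exact hx0
            · by_cases hvy : v = y
              · rw [hvy]; exact hy0
              · have hv' : v ∈ N'.verts := (hmem' v).2 ⟨hv, hvy, hvp⟩
                have hnc' : ∀ w, ¬ S' v w := by
                  intro w hw
                  by_cases hwx : w = x
                  · subst hwx
                    rcases (hadj' v w).1 (hS1 v w hw) with ⟨h1, -⟩ | ⟨rfl, -⟩
                    · exact hvp (hxpar v h1)
                    · exact hvq rfl
                  · exact hnc w (Or.inl ⟨hw, hwx⟩)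
                rw [← houtd v hv']
                exact hS4 v hv' hnc'
end PNet
namespace PNet

lemma ret_lift {N N' : PNet} (hbin : N.IsBinary) (h : N.RetCherryPick N') :
    N'.IsBinary ∧ (N'.TreeBased → N.TreeBased) := by
  obtain ⟨hac, ρ, ⟨hρv, hρ0⟩, hρ2, hreach, hclass⟩ := hbin
  obtain ⟨x, y, w, p, hxy, ⟨hxv, hx0⟩, ⟨hyv, hy0⟩, hwx, hw2, hpw, hpy, hple,
    q', hq'p, hq'w, hcase⟩ := h
  have hpv : p ∈ N.verts := (N.adj_mem p w hpw).1
  have hwv : w ∈ N.verts := (N.adj_mem w x hwx).1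
  have hq'v : q' ∈ N.verts := (N.adj_mem q' w hq'w).1
  have hpw' : p ≠ w := fun he => not_self_adj hac (he ▸ hpw)
  have hpy' : p ≠ y := fun he => not_self_adj hac (he ▸ hpy)
  have hwx' : w ≠ x := fun he => not_self_adj hac (he ▸ hwx)
  have hpx' : p ≠ x := fun he => not_adj_of_outdeg_zero hx0 (he ▸ hpw)
  have hwy' : w ≠ y := fun he => not_adj_of_outdeg_zero hy0 (he ▸ hwx)
  have hxρ : x ≠ ρ := fun he => by rw [he, hρ2] at hx0; omega
  have hyρ : y ≠ ρ := fun he => by rw [he, hρ2] at hy0; omega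
  have hwρ : w ≠ ρ := fun he => by rw [he, hρ0] at hw2; omega
  have hx1 : N.indeg x = 1 := by
    rcases hclass x hxv hxρ with ⟨_, h2⟩ | ⟨_, h2⟩ | ⟨h1, _⟩ <;> omega
  have hy1 : N.indeg y = 1 := by
    rcases hclass y hyv hyρ with ⟨_, h2⟩ | ⟨_, h2⟩ | ⟨h1, _⟩ <;> omega
  have hxpar : ∀ u, N.adj u x → u = w := fun u hu => parent_unique (by omega) hu hwx
  have hypar : ∀ u, N.adj u y → u = p := fun u hu => parent_unique (by omega) hu hpy
  have hwout : N.outdeg w = 1 := by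
    rcases hclass w hwv hwρ with ⟨h1, _⟩ | ⟨_, h2⟩ | ⟨h1, _⟩ <;> omega
  have hwchild : ∀ z, N.adj w z → z = x :=
    fun z hz => (child_unique (by omega) hwx hz).symm
  have hwpar : ∀ u, N.adj u w → u = p ∨ u = q' :=
    fun u hu => parent_mem_pair (by omega) hpw hq'w (fun he => hq'p he.symm) hu
  have hq'w' : q' ≠ w := fun he => not_self_adj hac (he ▸ hq'w)
  have hq'x : q' ≠ x := fun he => not_adj_of_outdeg_zero hx0 (he ▸ hq'w)
  have hq'y : q' ≠ y := fun he => not_adj_of_outdeg_zero hy0 (he ▸ hq'w)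
  rcases hcase with ⟨hp0, hverts', hadj'⟩ | ⟨q, hqp, hverts', hadj'⟩
  · -- p is the root: this contradicts binarity of N
    exfalso
    have hpρ : p = ρ := by
      by_contra hne
      rcases hclass p hpv hne with ⟨h1, _⟩ | ⟨h1, _⟩ | ⟨h1, _⟩ <;> omega
    have hpchild : ∀ z, N.adj p z → z = w ∨ z = y :=
      fun z hz => child_mem_pair (by rw [hpρ, hρ2]) hpw hpy hwy' hz
    have hsmall : ∀ v, Relation.ReflTransGen N.adj ρ v →
        v = p ∨ v = w ∨ v = y ∨ v = x := by
      intro v hv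
      induction hv with
      | refl => exact Or.inl hpρ.symm
      | tail hst hd ih =>
        rcases ih with rfl | rfl | rfl | rfl
        · rcases hpchild _ hd with h' | h'
          · exact Or.inr (Or.inl h')
          · exact Or.inr (Or.inr (Or.inl h'))
        · exact Or.inr (Or.inr (Or.inr (hwchild _ hd)))
        · exact absurd hd (not_adj_of_outdeg_zero hy0)
        · exact absurd hd (not_adj_of_outdeg_zero hx0)
    rcases hsmall q' (hreach q' hq'v) with he | he | he | he
    · exact hq'p he
    · exact hq'w' he
    · exact hq'y he
    · exact hq'x he
  · -- non-root case
    have hqv : q ∈ N.verts := (N.adj_mem q p hqp).1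
    have hqp' : q ≠ p := fun he => not_self_adj hac (he ▸ hqp)
    have hqw : q ≠ w := fun he => hpx' (hwchild p (he ▸ hqp))
    have hqx : q ≠ x := fun he => not_adj_of_outdeg_zero hx0 (he ▸ hqp)
    have hqy : q ≠ y := fun he => not_adj_of_outdeg_zero hy0 (he ▸ hqp)
    have hp1 : N.indeg p = 1 := le_antisymm hple (indeg_pos_of_adj hqp)
    have hpρ : p ≠ ρ := fun he => by rw [he, hρ0] at hp1; omega
    have hpout : N.outdeg p = 2 := by
      rcases hclass p hpv hpρ with ⟨_, h2⟩ | ⟨h1, _⟩ | ⟨_, h2⟩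
      · exact h2
      · omega
      · exact absurd hpw (not_adj_of_outdeg_zero h2)
    have hppar : ∀ u, N.adj u p → u = q := fun u hu => parent_unique (by omega) hu hqp
    have hpchild : ∀ z, N.adj p z → z = w ∨ z = y :=
      fun z hz => child_mem_pair (by omega) hpw hpy hwy' hz
    have hmem' : ∀ v, v ∈ N'.verts ↔ v ∈ N.verts ∧ v ≠ w ∧ v ≠ p := by
      intro v
      simp only [hverts', Finset.mem_sdiff, Finset.mem_insert, Finset.mem_singleton]
      tauto
    have hxv' : x ∈ N'.verts := (hmem' x).2 ⟨hxv, fun he => hwx' he.symm, fun he => hpx' he.symm⟩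
    have hyv' : y ∈ N'.verts := (hmem' y).2 ⟨hyv, fun he => hwy' he.symm, fun he => hpy' he.symm⟩
    have hqv' : q ∈ N'.verts := (hmem' q).2 ⟨hqv, hqw, hqp'⟩
    have hq'v' : q' ∈ N'.verts := (hmem' q').2 ⟨hq'v, hq'w', hq'p⟩
    have hρv' : ρ ∈ N'.verts := (hmem' ρ).2 ⟨hρv, fun he => hwρ he.symm, fun he => hpρ he.symm⟩
    -- in-degree preservation
    have hind : ∀ v ∈ N'.verts, N'.indeg v = N.indeg v := by
      intro v hv
      obtain ⟨hv0, hvw, hvp⟩ := (hmem' v).1 hv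
      by_cases hvx : v = x
      · have hfil : N'.verts.filter (fun a => N'.adj a x) = {q'} := by
          ext a
          simp only [Finset.mem_filter, Finset.mem_singleton]
          constructor
          · rintro ⟨ha, hadj⟩
            rcases (hadj' a x).1 hadj with ⟨h1, h2, -⟩ | ⟨he, -⟩ | ⟨-, he⟩
            · exact absurd (hxpar a h1) h2
            · exact he
            · exact absurd he hxy
          · intro ha
            exact ⟨ha ▸ hq'v', (hadj' a x).2 (Or.inr (Or.inl ⟨ha, rfl⟩))⟩
        unfold indeg
        rw [hvx, hfil, Finset.card_singleton]
        exact hx1.symm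
      · by_cases hvy : v = y
        · have hfil : N'.verts.filter (fun a => N'.adj a y) = {q} := by
            ext a
            simp only [Finset.mem_filter, Finset.mem_singleton]
            constructor
            · rintro ⟨ha, hadj⟩
              rcases (hadj' a y).1 hadj with ⟨h1, -, -, h2, -⟩ | ⟨-, he⟩ | ⟨he, -⟩
              · exact absurd (hypar a h1) h2
              · exact absurd he.symm hxy
              · exact he
            · intro ha
              exact ⟨ha ▸ hqv', (hadj' a y).2 (Or.inr (Or.inr ⟨ha, rfl⟩))⟩
          unfold indeg
          rw [hvy, hfil, Finset.card_singleton]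
          exact hy1.symm
        · have hfil : N'.verts.filter (fun a => N'.adj a v)
              = N.verts.filter (fun a => N.adj a v) := by
            ext a
            simp only [Finset.mem_filter, hmem']
            constructor
            · rintro ⟨⟨ha, -, -⟩, hadj⟩
              rcases (hadj' a v).1 hadj with ⟨h1, -⟩ | ⟨-, he⟩ | ⟨-, he⟩
              · exact ⟨ha, h1⟩
              · exact absurd he hvx
              · exact absurd he hvy
            · rintro ⟨ha, hadj⟩
              have haw : a ≠ w := fun he => hvx (hwchild v (he ▸ hadj))
              have hap : a ≠ p := by
                rintro rfl
                rcases hpchild v hadj with he | he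
                · exact hvw he
                · exact hvy he
              exact ⟨⟨ha, haw, hap⟩, (hadj' a v).2 (Or.inl ⟨hadj, haw, hvw, hap, hvp⟩)⟩
          unfold indeg
          rw [hfil]
    -- out-degree preservation
    have houtd : ∀ v ∈ N'.verts, N'.outdeg v = N.outdeg v := by
      intro v hv
      obtain ⟨hv0, hvw, hvp⟩ := (hmem' v).1 hv
      have hchar : ∀ z, N'.adj v z ↔ ((N.adj v z ∧ z ≠ w ∧ z ≠ p) ∨ (v = q' ∧ z = x) ∨ (v = q ∧ z = y)) := by
        intro z
        rw [hadj' v z]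
        constructor
        · rintro (⟨h1, -, h2, -, h3⟩ | h' | h')
          · exact Or.inl ⟨h1, h2, h3⟩
          · exact Or.inr (Or.inl h')
          · exact Or.inr (Or.inr h')
        · rintro (⟨h1, h2, h3⟩ | h' | h')
          · exact Or.inl ⟨h1, hvw, h2, hvp, h3⟩
          · exact Or.inr (Or.inl h')
          · exact Or.inr (Or.inr h')
      have hzverts : ∀ z, N.adj v z → z ≠ w → z ≠ p → z ∈ N'.verts :=
        fun z hz h1 h2 => (hmem' z).2 ⟨(N.adj_mem v z hz).2, h1, h2⟩
      by_cases hvq' : v = q'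
      · by_cases hvq : v = q
        · -- v = q = q' : both new edges from v
          have hfil : N'.verts.filter (fun z => N'.adj v z)
              = insert x (insert y (((N.verts.filter (fun z => N.adj v z)).erase w).erase p)) := by
            ext z
            simp only [Finset.mem_filter, Finset.mem_insert, Finset.mem_erase,
              Finset.mem_singleton]
            constructor
            · rintro ⟨hz, hadj⟩
              rcases (hchar z).1 hadj with ⟨h1, h2, h3⟩ | ⟨-, he⟩ | ⟨-, he⟩
              · exact Or.inr (Or.inr ⟨h3, h2, (N.adj_mem v z h1).2, h1⟩)
              · exact Or.inl he
              · exact Or.inr (Or.inl he)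
            · rintro (rfl | rfl | ⟨h3, h2, hz, hadj⟩)
              · exact ⟨hxv', (hchar z).2 (Or.inr (Or.inl ⟨hvq', rfl⟩))⟩
              · exact ⟨hyv', (hchar z).2 (Or.inr (Or.inr ⟨hvq, rfl⟩))⟩
              · exact ⟨hzverts z hadj h2 h3, (hchar z).2 (Or.inl ⟨hadj, h2, h3⟩)⟩
          have hwmem : w ∈ N.verts.filter (fun z => N.adj v z) :=
            Finset.mem_filter.2 ⟨hwv, hvq' ▸ hq'w⟩
          have hpmem : p ∈ (N.verts.filter (fun z => N.adj v z)).erase w :=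
            Finset.mem_erase.2 ⟨hpw', Finset.mem_filter.2 ⟨hpv, hvq ▸ hqp⟩⟩
          have hxne : x ∉ insert y (((N.verts.filter (fun z => N.adj v z)).erase w).erase p) := by
            simp only [Finset.mem_insert, Finset.mem_erase, Finset.mem_filter]
            rintro (he | ⟨-, -, -, hadj⟩)
            · exact hxy he
            · exact hq'w' ((hvq' ▸ hxpar v hadj :))
          have hyne : y ∉ ((N.verts.filter (fun z => N.adj v z)).erase w).erase p := by
            simp only [Finset.mem_erase, Finset.mem_filter]
            rintro ⟨-, -, -, hadj⟩
            exact hqp' ((hvq ▸ hypar v hadj :))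
          unfold outdeg
          rw [hfil, Finset.card_insert_of_notMem hxne, Finset.card_insert_of_notMem hyne,
            Finset.card_erase_of_mem hpmem, Finset.card_erase_of_mem hwmem]
          have h1 : 0 < (N.verts.filter (fun z => N.adj v z)).card := Finset.card_pos.2 ⟨w, hwmem⟩
          have h2 : 0 < ((N.verts.filter (fun z => N.adj v z)).erase w).card :=
            Finset.card_pos.2 ⟨p, hpmem⟩
          rw [Finset.card_erase_of_mem hwmem] at h2
          omega
        · -- v = q' only
          have hfil : N'.verts.filter (fun z => N'.adj v z)
              = insert x ((N.verts.filter (fun z => N.adj v z)).erase w) := by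
            ext z
            simp only [Finset.mem_filter, Finset.mem_insert, Finset.mem_erase]
            constructor
            · rintro ⟨hz, hadj⟩
              rcases (hchar z).1 hadj with ⟨h1, h2, -⟩ | ⟨-, he⟩ | ⟨he, -⟩
              · exact Or.inr ⟨h2, (N.adj_mem v z h1).2, h1⟩
              · exact Or.inl he
              · exact absurd he hvq
            · rintro (rfl | ⟨h2, hz, hadj⟩)
              · exact ⟨hxv', (hchar z).2 (Or.inr (Or.inl ⟨hvq', rfl⟩))⟩
              · have h3 : z ≠ p := fun he => hvq (hppar v (he ▸ hadj))
                exact ⟨hzverts z hadj h2 h3, (hchar z).2 (Or.inl ⟨hadj, h2, h3⟩)⟩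
          have hwmem : w ∈ N.verts.filter (fun z => N.adj v z) :=
            Finset.mem_filter.2 ⟨hwv, hvq' ▸ hq'w⟩
          have hxne : x ∉ (N.verts.filter (fun z => N.adj v z)).erase w := by
            simp only [Finset.mem_erase, Finset.mem_filter]
            rintro ⟨-, -, hadj⟩
            exact hq'w' ((hvq' ▸ hxpar v hadj :))
          unfold outdeg
          rw [hfil, Finset.card_insert_of_notMem hxne, Finset.card_erase_of_mem hwmem]
          have h1 : 0 < (N.verts.filter (fun z => N.adj v z)).card := Finset.card_pos.2 ⟨w, hwmem⟩
          omega
      · by_cases hvq : v = q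
        · -- v = q only
          have hfil : N'.verts.filter (fun z => N'.adj v z)
              = insert y ((N.verts.filter (fun z => N.adj v z)).erase p) := by
            ext z
            simp only [Finset.mem_filter, Finset.mem_insert, Finset.mem_erase]
            constructor
            · rintro ⟨hz, hadj⟩
              rcases (hchar z).1 hadj with ⟨h1, -, h3⟩ | ⟨he, -⟩ | ⟨-, he⟩
              · exact Or.inr ⟨h3, (N.adj_mem v z h1).2, h1⟩
              · exact absurd he hvq'
              · exact Or.inl he
            · rintro (rfl | ⟨h3, hz, hadj⟩)
              · exact ⟨hyv', (hchar z).2 (Or.inr (Or.inr ⟨hvq, rfl⟩))⟩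
              · have h2 : z ≠ w := by
                  intro he
                  rcases hwpar v (he ▸ hadj) with he' | he'
                  · exact hvp he'
                  · exact hvq' he'
                exact ⟨hzverts z hadj h2 h3, (hchar z).2 (Or.inl ⟨hadj, h2, h3⟩)⟩
          have hpmem : p ∈ N.verts.filter (fun z => N.adj v z) :=
            Finset.mem_filter.2 ⟨hpv, hvq ▸ hqp⟩
          have hyne : y ∉ (N.verts.filter (fun z => N.adj v z)).erase p := by
            simp only [Finset.mem_erase, Finset.mem_filter]
            rintro ⟨-, -, hadj⟩
            exact hqp' ((hvq ▸ hypar v hadj :))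
          unfold outdeg
          rw [hfil, Finset.card_insert_of_notMem hyne, Finset.card_erase_of_mem hpmem]
          have h1 : 0 < (N.verts.filter (fun z => N.adj v z)).card := Finset.card_pos.2 ⟨p, hpmem⟩
          omega
        · -- generic v
          have hfil : N'.verts.filter (fun z => N'.adj v z)
              = N.verts.filter (fun z => N.adj v z) := by
            ext z
            simp only [Finset.mem_filter, hmem']
            constructor
            · rintro ⟨⟨hz, -, -⟩, hadj⟩
              rcases (hchar z).1 hadj with ⟨h1, -⟩ | ⟨he, -⟩ | ⟨he, -⟩
              · exact ⟨hz, h1⟩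
              · exact absurd he hvq'
              · exact absurd he hvq
            · rintro ⟨hz, hadj⟩
              have h2 : z ≠ w := by
                intro he
                rcases hwpar v (he ▸ hadj) with he' | he'
                · exact hvp he'
                · exact hvq' he'
              have h3 : z ≠ p := fun he => hvq (hppar v (he ▸ hadj))
              exact ⟨⟨hz, h2, h3⟩, (hchar z).2 (Or.inl ⟨hadj, h2, h3⟩)⟩
          unfold outdeg
          rw [hfil]
    -- no outgoing edges from x or y in N'
    have hxout' : ∀ z, ¬ N'.adj x z := by
      intro z hz
      rcases (hadj' x z).1 hz with ⟨h1, -⟩ | ⟨he, -⟩ | ⟨he, -⟩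
      · exact not_adj_of_outdeg_zero hx0 h1
      · exact hq'x he.symm
      · exact hqx he.symm
    have hyout' : ∀ z, ¬ N'.adj y z := by
      intro z hz
      rcases (hadj' y z).1 hz with ⟨h1, -⟩ | ⟨he, -⟩ | ⟨he, -⟩
      · exact not_adj_of_outdeg_zero hy0 h1
      · exact hq'y he.symm
      · exact hqy he.symm
    constructor
    · -- N' is binary
      refine ⟨acyclic_lift hac x y ?_ hxout' hyout', ρ, ⟨hρv', ?_⟩, ?_, ?_, ?_⟩
      · intro u v hv
        rcases (hadj' u v).1 hv with ⟨h1, -⟩ | ⟨-, he⟩ | ⟨-, he⟩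
        · exact Or.inl h1
        · exact Or.inr (Or.inl he)
        · exact Or.inr (Or.inr he)
      · rw [hind ρ hρv', hρ0]
      · rw [houtd ρ hρv', hρ2]
      · -- reachability
        have claim : ∀ v, Relation.ReflTransGen N.adj ρ v →
            v ∈ N'.verts → v ≠ x → v ≠ y → Relation.ReflTransGen N'.adj ρ v := by
          intro v hv
          induction hv with
          | refl => intro _ _ _; exact Relation.ReflTransGen.refl
          | tail hst hd ih =>
            rename_i c v'
            intro hv' hvx hvy
            obtain ⟨hv0, hvw, hvp⟩ := (hmem' v').1 hv'
            have hcx : c ≠ x := fun he => not_adj_of_outdeg_zero hx0 (he ▸ hd)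
            have hcy : c ≠ y := fun he => not_adj_of_outdeg_zero hy0 (he ▸ hd)
            have hcw : c ≠ w := fun he => hvx (hwchild v' (he ▸ hd))
            have hcp : c ≠ p := by
              rintro rfl
              rcases hpchild v' hd with he | he
              · exact hvw he
              · exact hvy he
            have hcv' : c ∈ N'.verts := (hmem' c).2 ⟨(N.adj_mem c v' hd).1, hcw, hcp⟩
            exact (ih hcv' hcx hcy).tail
              ((hadj' c v').2 (Or.inl ⟨hd, hcw, hvw, hcp, hvp⟩))
        intro v hv
        by_cases hvx : v = x
        · have hq'path := claim q' (hreach q' hq'v) hq'v' hq'x hq'y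
          exact hq'path.tail ((hadj' q' v).2 (Or.inr (Or.inl ⟨rfl, hvx⟩)))
        · by_cases hvy : v = y
          · have hqpath := claim q (hreach q hqv) hqv' hqx hqy
            exact hqpath.tail ((hadj' q v).2 (Or.inr (Or.inr ⟨rfl, hvy⟩)))
          · exact claim v (hreach v ((hmem' v).1 hv).1) hv hvx hvy
      · intro v hv hvρ
        rw [hind v hv, houtd v hv]
        exact hclass v ((hmem' v).1 hv).1 hvρ
    · -- lifting tree-basedness
      rintro ⟨S', hS1, hS2, hS3, hS4⟩
      refine ⟨fun u v => (S' u v ∧ v ≠ x ∧ v ≠ y) ∨ (u = w ∧ v = x) ∨ (u = p ∧ v = y)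
        ∨ (u = q' ∧ v = w) ∨ (u = q ∧ v = p), ?_, ?_, ?_, ?_⟩
      · rintro u v (⟨hs, hvx, hvy⟩ | ⟨rfl, rfl⟩ | ⟨rfl, rfl⟩ | ⟨rfl, rfl⟩ | ⟨rfl, rfl⟩)
        · rcases (hadj' u v).1 (hS1 u v hs) with ⟨h1, -⟩ | ⟨-, he⟩ | ⟨-, he⟩
          · exact h1
          · exact absurd he hvx
          · exact absurd he hvy
        · exact hwx
        · exact hpy
        · exact hq'w
        · exact hqp
      · intro v hv hpos
        by_cases hvx : v = x
        · refine ⟨w, Or.inr (Or.inl ⟨rfl, hvx⟩), ?_⟩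
          rintro u (⟨-, hne, -⟩ | ⟨hu, -⟩ | ⟨-, he⟩ | ⟨-, he⟩ | ⟨-, he⟩)
          · exact absurd hvx hne
          · exact hu
          · exact absurd (hvx.symm.trans he) hxy
          · exact absurd (hvx.symm.trans he) (Ne.symm hwx')
          · exact absurd (hvx.symm.trans he) (Ne.symm hpx')
        · by_cases hvy : v = y
          · refine ⟨p, Or.inr (Or.inr (Or.inl ⟨rfl, hvy⟩)), ?_⟩
            rintro u (⟨-, -, hne⟩ | ⟨-, he⟩ | ⟨hu, -⟩ | ⟨-, he⟩ | ⟨-, he⟩)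
            · exact absurd hvy hne
            · exact absurd (hvy.symm.trans he) hxy.symm
            · exact hu
            · exact absurd (hvy.symm.trans he) (Ne.symm hwy')
            · exact absurd (hvy.symm.trans he) (Ne.symm hpy')
          · by_cases hvw : v = w
            · refine ⟨q', Or.inr (Or.inr (Or.inr (Or.inl ⟨rfl, hvw⟩))), ?_⟩
              rintro u (⟨hs, -, -⟩ | ⟨-, he⟩ | ⟨-, he⟩ | ⟨hu, -⟩ | ⟨-, he⟩)
              · rcases (hadj' u v).1 (hS1 u v hs) with ⟨-, -, hne, -⟩ | ⟨-, he⟩ | ⟨-, he⟩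
                · exact absurd hvw hne
                · exact absurd (he.symm.trans hvw) hwx'.symm
                · exact absurd (he.symm.trans hvw) hwy'.symm
              · exact absurd (hvw.symm.trans he) hwx'
              · exact absurd (hvw.symm.trans he) hwy'
              · exact hu
              · exact absurd (hvw.symm.trans he) (Ne.symm hpw')
            · by_cases hvp : v = p
              · refine ⟨q, Or.inr (Or.inr (Or.inr (Or.inr ⟨rfl, hvp⟩))), ?_⟩
                rintro u (⟨hs, -, -⟩ | ⟨-, he⟩ | ⟨-, he⟩ | ⟨-, he⟩ | ⟨hu, -⟩)
                · rcases (hadj' u v).1 (hS1 u v hs) with ⟨-, -, -, -, hne⟩ | ⟨-, he⟩ | ⟨-, he⟩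
                  · exact absurd hvp hne
                  · exact absurd (he.symm.trans hvp) hpx'.symm
                  · exact absurd (he.symm.trans hvp) hpy'.symm
                · exact absurd (hvp.symm.trans he) hpx'
                · exact absurd (hvp.symm.trans he) hpy'
                · exact absurd (hvp.symm.trans he) hpw'
                · exact hu
              · have hv' : v ∈ N'.verts := (hmem' v).2 ⟨hv, hvw, hvp⟩
                obtain ⟨u0, hu0, huniq⟩ := hS2 v hv' (by rw [hind v hv']; exact hpos)
                refine ⟨u0, Or.inl ⟨hu0, hvx, hvy⟩, ?_⟩
                rintro u (⟨hs, -, -⟩ | ⟨-, he⟩ | ⟨-, he⟩ | ⟨-, he⟩ | ⟨-, he⟩)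
                · exact huniq u hs
                · exact absurd he hvx
                · exact absurd he hvy
                · exact absurd he hvw
                · exact absurd he hvp
      · intro v hv h0 u hu
        have hvx : v ≠ x := fun he => by rw [he, hx1] at h0; omega
        have hvy : v ≠ y := fun he => by rw [he, hy1] at h0; omega
        have hvw : v ≠ w := fun he => by rw [he, hw2] at h0; omega
        have hvp : v ≠ p := fun he => by rw [he, hp1] at h0; omega
        rcases hu with ⟨hs, -, -⟩ | ⟨-, he⟩ | ⟨-, he⟩ | ⟨-, he⟩ | ⟨-, he⟩
        · have hv' : v ∈ N'.verts := (hmem' v).2 ⟨hv, hvw, hvp⟩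
          exact hS3 v hv' (by rw [hind v hv', h0]) u hs
        · exact absurd he hvx
        · exact absurd he hvy
        · exact absurd he hvw
        · exact absurd he hvp
      · intro v hv hnc
        by_cases hvw : v = w
        · exact absurd (Or.inr (Or.inl ⟨hvw, rfl⟩)) (hnc x)
        · by_cases hvp : v = p
          · exact absurd (Or.inr (Or.inr (Or.inl ⟨hvp, rfl⟩))) (hnc y)
          · by_cases hvq' : v = q'
            · exact absurd (Or.inr (Or.inr (Or.inr (Or.inl ⟨hvq', rfl⟩)))) (hnc w)
            · by_cases hvq : v = q
              · exact absurd (Or.inr (Or.inr (Or.inr (Or.inr ⟨hvq, rfl⟩)))) (hnc p)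
              · by_cases hvx : v = x
                · rw [hvx]; exact hx0
                · by_cases hvy : v = y
                  · rw [hvy]; exact hy0
                  · have hv' : v ∈ N'.verts := (hmem' v).2 ⟨hv, hvw, hvp⟩
                    have hnc' : ∀ z, ¬ S' v z := by
                      intro z hz
                      by_cases hzx : z = x
                      · rcases (hadj' v z).1 (hS1 v z hz) with ⟨h1, -⟩ | ⟨he, -⟩ | ⟨-, he⟩
                        · exact hvw (hxpar v (hzx ▸ h1))
                        · exact hvq' he
                        · exact hxy (hzx.symm.trans he)
                      · by_cases hzy : z = y
                        · rcases (hadj' v z).1 (hS1 v z hz) with ⟨h1, -⟩ | ⟨-, he⟩ | ⟨he, -⟩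
                          · exact hvp (hypar v (hzy ▸ h1))
                          · exact hxy ((hzy ▸ he :)).symm
                          · exact hvq he
                        · exact hnc z (Or.inl ⟨hz, hzx, hzy⟩)
                    rw [← houtd v hv']
                    exact hS4 v hv' hnc'
end PNet
open PNet in
/-- Every binary orchard phylogenetic network is tree-based. -/
theorem stmt6 (N : PNet) (hbin : N.IsBinary) (horch : N.Orchard) :
    N.TreeBased := by
  obtain ⟨T, hT, hred⟩ := horch
  revert hbin
  induction hred using Relation.ReflTransGen.head_induction_on with
  | refl => exact fun _ => isTrivial_treeBased hT
  | head hstep hrest ih =>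
    intro hbin
    rcases hstep with hch | hrc
    · rcases cherry_lift hbin hch with htb | ⟨hbin', hlift⟩
      · exact htb
      · exact hlift (ih hbin')
    · obtain ⟨hbin', hlift⟩ := ret_lift hbin hrc
      exact hlift (ih hbin')
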